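/- Let δ : ℤ → ℂ and let f : ℤ × ℤ × ℤ → ℂ (written f^t_{n,m}) be nowhere vanishing and satisfy the discrete KP equation −δ_m f^{t+1}_{n,m} f^t_{n+1,m+1} + (1+δ_m) f^t_{n+1,m} f^{t+1}_{n,m+1} − f^t_{n,m+1} f^{t+1}_{n+1,m} = 0 for all n, m, t. Define I^t_{n,m} := (1+δ_m) f^t_{n,m} f^{t+1}_{n,m+1} / (f^t_{n,m+1} f^{t+1}_{n,m}) and V^t_{n,m} := δ_m f^t_{n,m} f^t_{n+1,m+1} / (f^t_{n+1,m} f^t_{n,m+1}). Then for all n, m, t one has I^t_{n,m+1} + V^{t+1}_{n,m} = I^t_{n+1,m} + V^t_{n,m+1} and I^t_{n,m} V^{t+1}_{n,m} = I^t_{n+1,m} V^t_{n,m}. -/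

import Mathlib

/-- from the bilinear discrete KP equation for a nowhere-vanishing
tau function `f`, the variables `I`, `V` defined as the stated ratios satisfy the
conservation form of dKP. -/
theorem dKP_IV_form (δ : ℤ → ℂ) (f : ℤ → ℤ → ℤ → ℂ)
    (hf : ∀ t n m, f t n m ≠ 0)
    (hKP : ∀ t n m,
      -δ m * f (t + 1) n m * f t (n + 1) (m + 1)
        + (1 + δ m) * f t (n + 1) m * f (t + 1) n (m + 1)
        - f t n (m + 1) * f (t + 1) (n + 1) m = 0)
    (I V : ℤ → ℤ → ℤ → ℂ)
    (hI : ∀ t n m, I t n m =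
      (1 + δ m) * f t n m * f (t + 1) n (m + 1) / (f t n (m + 1) * f (t + 1) n m))
    (hV : ∀ t n m, V t n m =
      δ m * f t n m * f t (n + 1) (m + 1) / (f t (n + 1) m * f t n (m + 1))) :
    ∀ t n m,
      I t n (m + 1) + V (t + 1) n m = I t (n + 1) m + V t n (m + 1) ∧
      I t n m * V (t + 1) n m = I t (n + 1) m * V t n m := by
  intro t n m
  constructor
  · -- both `I t (n+1) m − V (t+1) n m` and `I t n (m+1) − V t n (m+1)` equal the
    -- same quantity E, using the KP equation at (t,n,m) and (t,n,m+1) resp.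
    have key1 :
        (1 + δ m) * f t (n+1) m * f (t + 1) (n+1) (m + 1) / (f t (n+1) (m + 1) * f (t + 1) (n+1) m)
          - δ m * f (t+1) n m * f (t+1) (n + 1) (m + 1) / (f (t+1) (n + 1) m * f (t+1) n (m + 1))
        = f t n (m+1) * f (t+1) (n+1) (m+1) / (f (t+1) n (m+1) * f t (n+1) (m+1)) := by
      have h := hKP t n m
      field_simp [hf]
      linear_combination h
    have key2 :
        (1 + δ (m+1)) * f t n (m+1) * f (t + 1) n (m + 1 + 1) / (f t n (m + 1 + 1) * f (t + 1) n (m+1))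
          - δ (m+1) * f t n (m+1) * f t (n + 1) (m + 1 + 1) / (f t (n + 1) (m+1) * f t n (m + 1 + 1))
        = f t n (m+1) * f (t+1) (n+1) (m+1) / (f (t+1) n (m+1) * f t (n+1) (m+1)) := by
      have h := hKP t n (m+1)
      field_simp [hf]
      linear_combination h
    rw [hI, hI, hV, hV]
    linear_combination key2 - key1
  · rw [hI, hI, hV, hV]
    field_simp [hf]
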